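/- The assignment a_m ↦ 1 if n+1 ∉ m, and a_m ↦ a_{m \ {n+1}} if n+1 ∈ m, extends to a well-defined group homomorphism π : G_{n+1}^{k+1} → G_n^k. -/
import Mathlib


/-- Generator index: a `k`-element subset of `{1,…,n}` (modelled as `Fin n`). -/
abbrev GenIdx (n k : ℕ) := {m : Finset (Fin n) // m.card = k}

/-- Relators of the group `G_n^k`. -/
def gnkRels (n k : ℕ) : Set (FreeGroup (GenIdx n k)) :=
  {r | (∃ m : GenIdx n k, r = FreeGroup.of m ^ 2) ∨
    (∃ m m' : GenIdx n k, (m.1 ∩ m'.1).card < k - 1 ∧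
      r = FreeGroup.of m * FreeGroup.of m' * (FreeGroup.of m)⁻¹ * (FreeGroup.of m')⁻¹) ∨
    (∃ (U : Finset (Fin n)) (L : List (GenIdx n k)), U.card = k + 1 ∧ L.Nodup ∧
      (∀ m : GenIdx n k, m ∈ L ↔ m.1 ⊆ U) ∧ r = (L.map FreeGroup.of).prod ^ 2)}

/-- The group `G_n^k`, presented by generators `a_m` and the relations above. -/
abbrev Gnk (n k : ℕ) := PresentedGroup (gnkRels n k)

/-- The generator `a_m` of `G_n^k`. -/
abbrev gnkGen {n k : ℕ} (m : GenIdx n k) : Gnk n k := PresentedGroup.of m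

namespace GnkProj

variable {n k : ℕ}

lemma mem_range_castSucc {S : Finset (Fin (n + 1))} (h : Fin.last n ∉ S)
    {x : Fin (n + 1)} (hx : x ∈ S) : x ∈ Set.range (Fin.castSucc : Fin n → Fin (n + 1)) := by
  rw [Fin.range_castSucc]
  have : x ≠ Fin.last n := fun he => h (he ▸ hx)
  simpa [Fin.lt_iff_val_lt_val, Fin.last] using
    lt_of_le_of_ne (Nat.lt_succ_iff.mp x.2) (fun hc => this (Fin.ext hc))

lemma pre_card (S : Finset (Fin (n + 1))) (h : Fin.last n ∉ S) :
    (S.preimage Fin.castSucc (Fin.castSucc_injective n).injOn).card = S.card := by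
  classical
  rw [Finset.card_preimage]
  congr 1
  exact Finset.filter_true_of_mem fun x hx => mem_range_castSucc h hx

lemma image_pre (S : Finset (Fin (n + 1))) (h : Fin.last n ∉ S) :
    (S.preimage Fin.castSucc (Fin.castSucc_injective n).injOn).image Fin.castSucc = S := by
  classical
  rw [Finset.image_preimage]
  exact Finset.filter_true_of_mem fun x hx => mem_range_castSucc h hx

lemma pre_image (s : Finset (Fin n)) :
    (s.image Fin.castSucc).preimage Fin.castSucc (Fin.castSucc_injective n).injOn = s := by
  ext x
  simp [Finset.mem_preimage, Finset.mem_image, (Fin.castSucc_injective n).eq_iff]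

lemma preimage_inter (S T : Finset (Fin (n + 1))) :
    ((S ∩ T).preimage Fin.castSucc (Fin.castSucc_injective n).injOn) =
      S.preimage Fin.castSucc (Fin.castSucc_injective n).injOn ∩
      T.preimage Fin.castSucc (Fin.castSucc_injective n).injOn := by
  ext x; simp [Finset.mem_preimage]

/-- The index `M \ {n+1}` for `M` containing `n+1`. -/
noncomputable def prIdx (M : GenIdx (n + 1) (k + 1)) (h : Fin.last n ∈ M.1) : GenIdx n k :=
  ⟨(M.1.erase (Fin.last n)).preimage Fin.castSucc (Fin.castSucc_injective n).injOn, by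
    rw [pre_card _ (Finset.notMem_erase _ _), Finset.card_erase_of_mem h, M.2]; rfl⟩

lemma prIdx_image (M : GenIdx (n + 1) (k + 1)) (h : Fin.last n ∈ M.1) :
    (prIdx M h).1.image Fin.castSucc = M.1.erase (Fin.last n) :=
  image_pre _ (Finset.notMem_erase _ _)

lemma prIdx_eq (M : GenIdx (n + 1) (k + 1)) (h : Fin.last n ∈ M.1) (m : GenIdx n k)
    (hm : m.1.image Fin.castSucc = M.1.erase (Fin.last n)) : prIdx M h = m := by
  apply Subtype.ext
  have := (prIdx_image M h).trans hm.symm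
  exact (Finset.image_injective (Fin.castSucc_injective n)) this

/-- The map on generators. -/
noncomputable def genMap (M : GenIdx (n + 1) (k + 1)) : Gnk n k :=
  if h : Fin.last n ∈ M.1 then gnkGen (prIdx M h) else 1

/-- The quotient map `FreeGroup (GenIdx n k) →* Gnk n k`. -/
def gnkMk (n k : ℕ) : FreeGroup (GenIdx n k) →* Gnk n k :=
  QuotientGroup.mk' (Subgroup.normalClosure (gnkRels n k))

lemma gnkMk_of (m : GenIdx n k) : gnkMk n k (FreeGroup.of m) = gnkGen m := rfl

lemma gnkMk_rel {r : FreeGroup (GenIdx n k)} (h : r ∈ gnkRels n k) : gnkMk n k r = 1 := by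
  exact (QuotientGroup.eq_one_iff r).mpr (Subgroup.subset_normalClosure h)

lemma gen_sq (m : GenIdx n k) : gnkGen m ^ 2 = 1 := by
  have := gnkMk_rel (n := n) (k := k) (Or.inl ⟨m, rfl⟩)
  simpa [map_pow, gnkMk_of] using this

lemma gen_comm {m m' : GenIdx n k} (h : (m.1 ∩ m'.1).card < k - 1) :
    gnkGen m * gnkGen m' * (gnkGen m)⁻¹ * (gnkGen m')⁻¹ = 1 := by
  have := gnkMk_rel (n := n) (k := k) (Or.inr (Or.inl ⟨m, m', h, rfl⟩))
  simpa [map_mul, map_inv, gnkMk_of] using this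

lemma rel3 {U : Finset (Fin n)} {L : List (GenIdx n k)} (hU : U.card = k + 1)
    (hnd : L.Nodup) (hmem : ∀ m : GenIdx n k, m ∈ L ↔ m.1 ⊆ U) :
    ((L.map gnkGen).prod) ^ 2 = 1 := by
  have := gnkMk_rel (n := n) (k := k) (Or.inr (Or.inr ⟨U, L, hU, hnd, hmem, rfl⟩))
  rw [map_pow, map_list_prod, List.map_map] at this
  exact this

end GnkProj

open GnkProj in
/-- the assignment `a_M ↦ 1` if `n+1 ∉ M` and `a_M ↦ a_{M \ {n+1}}`
if `n+1 ∈ M` extends to a well-defined group homomorphism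
`π : G_{n+1}^{k+1} → G_n^k`. -/
theorem exists_projection_hom (n k : ℕ) (hk : 2 ≤ k) (hn : k < n) :
    ∃ π : Gnk (n + 1) (k + 1) →* Gnk n k,
      (∀ M : GenIdx (n + 1) (k + 1), Fin.last n ∉ M.1 → π (gnkGen M) = 1) ∧
      (∀ (M : GenIdx (n + 1) (k + 1)) (m : GenIdx n k), Fin.last n ∈ M.1 →
        m.1.image Fin.castSucc = M.1.erase (Fin.last n) →
          π (gnkGen M) = gnkGen m) := by
  classical
  have hrels : ∀ r ∈ gnkRels (n + 1) (k + 1), FreeGroup.lift genMap r = 1 := by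
    rintro r (⟨M, rfl⟩ | ⟨M, M', hcard, rfl⟩ | ⟨U, L, hU, hnd, hmem, rfl⟩)
    · -- squares
      rw [map_pow, FreeGroup.lift_apply_of]
      by_cases h : Fin.last n ∈ M.1
      · rw [genMap, dif_pos h]; exact gen_sq _
      · rw [genMap, dif_neg h, one_pow]
    · -- commutators
      simp only [map_mul, map_inv, FreeGroup.lift_apply_of]
      by_cases h : Fin.last n ∈ M.1
      · by_cases h' : Fin.last n ∈ M'.1
        · rw [genMap, genMap, dif_pos h, dif_pos h']
          apply gen_comm
          have hsub : (prIdx M h).1 ∩ (prIdx M' h').1 =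
              ((M.1 ∩ M'.1).erase (Fin.last n)).preimage Fin.castSucc
                (Fin.castSucc_injective n).injOn := by
            rw [show (M.1 ∩ M'.1).erase (Fin.last n) =
                M.1.erase (Fin.last n) ∩ M'.1.erase (Fin.last n) by
              ext x; simp [Finset.mem_erase, Finset.mem_inter]; tauto]
            exact (preimage_inter _ _).symm
          rw [hsub, pre_card _ (Finset.notMem_erase _ _),
            Finset.card_erase_of_mem (Finset.mem_inter.mpr ⟨h, h'⟩)]
          omega
        · rw [genMap, genMap, dif_neg h']; group
      · rw [genMap, dif_neg h]; group
    · -- cyclic relations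
      rw [map_pow, map_list_prod, List.map_map]
      have hfl : (L.map (FreeGroup.lift genMap ∘ FreeGroup.of)) = L.map genMap := by
        simp [Function.comp_def]
      rw [hfl]
      by_cases hUl : Fin.last n ∈ U
      · -- last ∈ U : relation maps to relation
        set U' : Finset (Fin n) :=
          (U.erase (Fin.last n)).preimage Fin.castSucc (Fin.castSucc_injective n).injOn with hU'def
        have hU' : U'.card = k + 1 := by
          rw [hU'def, pre_card _ (Finset.notMem_erase _ _), Finset.card_erase_of_mem hUl, hU]
          omega
        set g : GenIdx (n + 1) (k + 1) → Option (GenIdx n k) := fun M =>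
          if h : Fin.last n ∈ M.1 then some (prIdx M h) else none with hgdef
        have hg_some : ∀ (M : GenIdx (n + 1) (k + 1)) (m : GenIdx n k),
            g M = some m → ∃ h : Fin.last n ∈ M.1, prIdx M h = m := by
          intro M m hgm
          rw [hgdef] at hgm
          by_cases h : Fin.last n ∈ M.1
          · exact ⟨h, by simpa [dif_pos h] using hgm⟩
          · simp [dif_neg h] at hgm
        have hg_M : ∀ (M : GenIdx (n + 1) (k + 1)) (m : GenIdx n k),
            g M = some m → M.1 = insert (Fin.last n) (m.1.image Fin.castSucc) := by
          intro M m hgm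
          obtain ⟨h, rfl⟩ := hg_some M m hgm
          rw [prIdx_image M h, Finset.insert_erase h]
        have hprod : ∀ L₀ : List (GenIdx (n + 1) (k + 1)),
            (L₀.map genMap).prod = ((L₀.filterMap g).map gnkGen).prod := by
          intro L₀
          induction L₀ with
          | nil => simp
          | cons M L₀ ih =>
            by_cases h : Fin.last n ∈ M.1
            · rw [List.map_cons,
                List.filterMap_cons_some (b := prIdx M h)
                  (show g M = some (prIdx M h) by rw [hgdef]; exact dif_pos h),
                List.map_cons, List.prod_cons, List.prod_cons, ih, genMap, dif_pos h]
            · rw [List.map_cons,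
                List.filterMap_cons_none
                  (show g M = none by rw [hgdef]; exact dif_neg h),
                List.prod_cons, ih, genMap, dif_neg h, one_mul]
        rw [hprod L]
        apply rel3 hU'
        · apply hnd.filterMap
          intro M M' m hm hm'
          exact Subtype.ext ((hg_M M m hm).trans (hg_M M' m hm').symm)
        · intro m
          rw [List.mem_filterMap]
          constructor
          · rintro ⟨M, hML, hgm⟩
            obtain ⟨h, rfl⟩ := hg_some M m hgm
            have hMU : M.1 ⊆ U := (hmem M).mp hML
            intro x hx
            have hx' : Fin.castSucc x ∈ M.1.erase (Fin.last n) := by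
              simpa [prIdx, Finset.mem_preimage] using hx
            have hx'' : Fin.castSucc x ∈ U.erase (Fin.last n) :=
              Finset.erase_subset_erase _ hMU hx'
            simpa [hU'def, Finset.mem_preimage] using hx''
          · intro hmU'
            have hlim : Fin.last n ∉ m.1.image Fin.castSucc := by
              simp only [Finset.mem_image, not_exists]
              rintro x ⟨-, hx⟩
              exact absurd hx (Fin.castSucc_lt_last x).ne
            have hMcard : (insert (Fin.last n) (m.1.image Fin.castSucc)).card = k + 1 := by
              rw [Finset.card_insert_of_notMem hlim,
                Finset.card_image_of_injective _ (Fin.castSucc_injective n), m.2]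
            refine ⟨⟨insert (Fin.last n) (m.1.image Fin.castSucc), hMcard⟩, ?_, ?_⟩
            · rw [hmem]
              apply Finset.insert_subset hUl
              calc m.1.image Fin.castSucc ⊆ U'.image Fin.castSucc :=
                    Finset.image_subset_image hmU'
                _ = U.erase (Fin.last n) := image_pre _ (Finset.notMem_erase _ _)
                _ ⊆ U := Finset.erase_subset _ _
            · have h : Fin.last n ∈ insert (Fin.last n) (m.1.image Fin.castSucc) :=
                Finset.mem_insert_self _ _
              rw [hgdef]
              simp only [dif_pos h, Option.some.injEq]
              apply prIdx_eq
              rw [Finset.erase_insert hlim]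
      · -- last ∉ U : everything maps to 1
        have : ∀ x ∈ L.map genMap, x = 1 := by
          intro x hx
          obtain ⟨M, hML, rfl⟩ := List.mem_map.mp hx
          have : Fin.last n ∉ M.1 := fun h => hUl ((hmem M).mp hML h)
          rw [genMap, dif_neg this]
        rw [List.prod_eq_one this, one_pow]
  refine ⟨PresentedGroup.toGroup hrels, ?_, ?_⟩
  · intro M hM
    rw [gnkGen, PresentedGroup.toGroup.of, genMap, dif_neg hM]
  · intro M m hM hm
    rw [gnkGen, PresentedGroup.toGroup.of, genMap, dif_pos hM, prIdx_eq M hM m hm]
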